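/- The sum c₁ := 2·∑_{y=1}^∞ |INF(y, t_max(y))| converges to a finite real number. -/

import Mathlib

/-- Heat kernel of the simple symmetric random walk on ℤ:
`H x t = 2^{-t} * choose t ((t+x)/2)` when `t ≥ 0`, `t ≡ x (mod 2)`, `|x| ≤ t`; else `0`. -/
noncomputable def H (x t : ℤ) : ℝ :=
  if 0 ≤ t ∧ (2 : ℤ) ∣ (t - x) ∧ |x| ≤ t then
    (2 : ℝ) ^ (-t) * (t.toNat.choose ((t + x) / 2).toNat)
  else 0

/-- Influence of a deterministic right-step compared to a random step. -/
noncomputable def INF (y t : ℤ) : ℝ :=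
  if t ≤ 0 then 0 else H (y + 1) (t - 1) - H y t

/-- `t_max y = ⌊(y² - 4)/3⌋ + 2`. -/
def tmax (y : ℤ) : ℤ := Int.fdiv (y ^ 2 - 4) 3 + 2

lemma central_sqrt (m : ℕ) : (Nat.centralBinom m : ℝ) * Real.sqrt (3*m+1) ≤ 4 ^ m := by
  induction m with
  | zero => simp [Nat.centralBinom]
  | succ m ih =>
    have hcast : (3*((m+1:ℕ)):ℝ)+1 = 3*((m:ℝ)+1)+1 := by push_cast; ring
    rw [hcast]
    have hC : (0:ℝ) < Nat.centralBinom m := by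
      exact_mod_cast Nat.centralBinom_pos m
    set a := Real.sqrt (3*m+1) with ha
    set b := Real.sqrt (3*((m:ℝ)+1)+1) with hb
    have ha0 : 0 ≤ a := Real.sqrt_nonneg _
    have hb0 : 0 ≤ b := Real.sqrt_nonneg _
    have ha2 : a^2 = 3*m+1 := Real.sq_sqrt (by positivity)
    have hb2 : b^2 = 3*((m:ℝ)+1)+1 := Real.sq_sqrt (by positivity)
    -- key: (2m+1) * b ≤ (2m+2) * a
    have key : (2*m+1) * b ≤ (2*m+2) * a := by
      have h1 : ((2*m+1) * b)^2 ≤ ((2*m+2) * a)^2 := by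
        rw [mul_pow, mul_pow, ha2, hb2]
        push_cast
        nlinarith [sq_nonneg ((m:ℝ))]
      have h2 : (0:ℝ) ≤ (2*m+2) * a := by positivity
      nlinarith [mul_self_nonneg ((2*m+1) * b - (2*m+2) * a)]
    -- recurrence
    have hrec : ((m:ℝ)+1) * Nat.centralBinom (m+1) = 2*(2*m+1) * Nat.centralBinom m := by
      exact_mod_cast congrArg (Nat.cast (R := ℝ)) (Nat.succ_mul_centralBinom_succ m)
    have hm1 : (0:ℝ) < (m:ℝ)+1 := by positivity
    rw [show (4:ℝ)^(m+1) = 4 * 4^m by ring]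
    rw [← mul_le_mul_iff_of_pos_left hm1, ← mul_assoc, hrec]
    calc 2*(2*m+1) * (Nat.centralBinom m : ℝ) * b
        = 2 * (Nat.centralBinom m : ℝ) * ((2*m+1) * b) := by ring
      _ ≤ 2 * (Nat.centralBinom m : ℝ) * ((2*m+2) * a) := by
          apply mul_le_mul_of_nonneg_left key; positivity
      _ = 4*((m:ℝ)+1) * ((Nat.centralBinom m : ℝ) * a) := by ring
      _ ≤ 4*((m:ℝ)+1) * (4^m) := by
          apply mul_le_mul_of_nonneg_left ih; positivity
      _ = ((m:ℝ)+1) * (4 * 4^m) := by ring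

lemma choose_sqrt (t k : ℕ) : (t.choose k : ℝ) * Real.sqrt t ≤ 2 ^ t := by
  have h1 : (t.choose k : ℝ) ≤ t.choose (t/2) := by
    exact_mod_cast Nat.choose_le_middle k t
  have hst : (0:ℝ) ≤ Real.sqrt t := Real.sqrt_nonneg _
  rcases Nat.even_or_odd t with ⟨m, hm⟩ | ⟨m, hm⟩
  · -- t = m + m
    have ht2 : t = 2*m := by omega
    clear hm
    have hdiv : t/2 = m := by omega
    have hcb : (t.choose (t/2) : ℝ) = Nat.centralBinom m := by
      subst ht2; rw [hdiv, Nat.centralBinom]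
    have hsq : Real.sqrt t ≤ Real.sqrt (3*m+1) := by
      apply Real.sqrt_le_sqrt; rw [ht2]; push_cast; linarith
    calc (t.choose k : ℝ) * Real.sqrt t ≤ (Nat.centralBinom m : ℝ) * Real.sqrt (3*m+1) := by
          apply mul_le_mul (hcb ▸ h1) hsq hst (by positivity)
      _ ≤ 4^m := central_sqrt m
      _ = 2^t := by rw [ht2, pow_mul]; norm_num
  · -- t = 2m+1
    have ht2 : t = 2*m+1 := hm
    have hdiv : t/2 = m := by omega
    have hpascal : t.choose (t/2) = (2*m).choose m + (2*m).choose (m+1) := by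
      subst ht2; rw [hdiv]
      rw [show (2*m+1).choose m = (2*m+1).choose (m+1) by
        rw [← Nat.choose_symm (by omega : m+1 ≤ 2*m+1)]; congr 1; omega]
      exact Nat.choose_succ_succ (2*m) m
    have hle2 : (t.choose (t/2) : ℝ) ≤ 2 * Nat.centralBinom m := by
      rw [hpascal, Nat.centralBinom]
      have := Nat.choose_le_middle (m+1) (2*m)
      have h2 : (2*m)/2 = m := by omega
      rw [h2] at this
      push_cast
      have h3 : ((2*m).choose (m+1) : ℝ) ≤ (2*m).choose m := by exact_mod_cast this
      push_cast
      linarith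
    have hsq : Real.sqrt t ≤ Real.sqrt (3*m+1) := by
      apply Real.sqrt_le_sqrt; rw [ht2]; push_cast; linarith
    calc (t.choose k : ℝ) * Real.sqrt t ≤ (2 * Nat.centralBinom m : ℝ) * Real.sqrt (3*m+1) := by
          apply mul_le_mul (le_trans h1 hle2) hsq hst (by positivity)
      _ = 2 * ((Nat.centralBinom m : ℝ) * Real.sqrt (3*m+1)) := by ring
      _ ≤ 2 * 4^m := by linarith [central_sqrt m]
      _ = 2^t := by rw [ht2, pow_succ, pow_mul]; norm_num; ring

lemma INF_bound (y t : ℤ) (hy : 1 ≤ y) (ht : 1 ≤ t) :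
    |INF y t| ≤ (y:ℝ) / ((t:ℝ) * Real.sqrt t) := by
  have htR : (1:ℝ) ≤ (t:ℝ) := by exact_mod_cast ht
  have hyR : (1:ℝ) ≤ (y:ℝ) := by exact_mod_cast hy
  have hsp : 0 < Real.sqrt t := Real.sqrt_pos.mpr (by linarith)
  have hRHS : 0 ≤ (y:ℝ) / ((t:ℝ) * Real.sqrt t) := by positivity
  have habsy : |y| = y := abs_of_pos (by omega)
  have habsy1 : |y+1| = y+1 := abs_of_pos (by omega)
  rw [INF, if_neg (by omega)]
  set tn := t.toNat with htn
  have htnt : (tn:ℤ) = t := Int.toNat_of_nonneg (by omega)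
  have htnR : ((tn:ℕ):ℝ) = (t:ℝ) := by exact_mod_cast htnt
  have htn1 : 1 ≤ tn := by omega
  have hsqtn : Real.sqrt (tn:ℝ) = Real.sqrt t := by rw [htnR]
  have hA : (2:ℝ)^(-t) = ((2:ℝ)^tn)⁻¹ := by
    rw [← htnt, zpow_neg, zpow_natCast]
  have h2pos : (0:ℝ) < 2^tn := by positivity
  by_cases hpar : (2:ℤ) ∣ (t - y)
  · by_cases hyt : y < t
    · -- main case: y ≤ t - 2
      set k := ((t+y)/2).toNat with hk
      have hk2 : 2*(k:ℤ) = t + y := by omega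
      have hktn : k ≤ tn := by omega
      have e1 : (t-1).toNat = tn - 1 := by omega
      have e2 : ((t - 1 + (y + 1)) / 2).toNat = k := by omega
      have hH1 : H (y+1) (t-1) = (2:ℝ)^(-(t-1)) * ((tn-1).choose k) := by
        rw [H, if_pos ⟨by omega, by omega, by omega⟩, e1, e2]
      have hH0 : H y t = (2:ℝ)^(-t) * (tn.choose k) := by
        rw [H, if_pos ⟨by omega, hpar, by omega⟩]
      set c0 : ℝ := (tn.choose k : ℝ) with hc0
      set c1 : ℝ := ((tn-1).choose k : ℝ) with hc1
      have hc0n : 0 ≤ c0 := Nat.cast_nonneg _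
      have hidN : (tn-1).choose k * tn = tn.choose k * (tn - k) := by
        have := Nat.choose_mul_succ_eq (tn-1) k
        rw [show tn - 1 + 1 = tn by omega] at this
        exact this
      have h2c1 : 2 * c1 * t = c0 * ((t:ℝ) - y) := by
        have hR : c1 * (tn:ℝ) = c0 * ((tn:ℝ) - (k:ℝ)) := by
          rw [hc0, hc1, ← Nat.cast_sub hktn]
          exact_mod_cast congrArg (Nat.cast (R := ℝ)) hidN
        have hkR : 2*(k:ℝ) = (t:ℝ) + (y:ℝ) := by exact_mod_cast hk2
        rw [htnR] at hR
        linear_combination 2*hR - c0*hkR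
      have hA1 : (2:ℝ)^(-(t-1)) = 2 * (2:ℝ)^(-t) := by
        rw [show -(t-1) = -t + 1 by ring, zpow_add₀ (two_ne_zero) (-t) 1]
        ring
      set A : ℝ := ((2:ℝ)^tn)⁻¹ with hAdef
      have ht0 : (t:ℝ) ≠ 0 := by linarith
      have hval : (t:ℝ) * (H (y+1) (t-1) - H y t) = -(A * c0 * y) := by
        rw [hH0, hH1, hA1, hA]
        linear_combination A * h2c1
      have hdiff : H (y+1) (t-1) - H y t = -(A * c0 * y) / t := by
        rw [eq_div_iff ht0]; linarith [hval]
      have hAc0 : A * c0 ≤ 1 / Real.sqrt t := by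
        rw [hAdef, inv_mul_eq_div, div_le_div_iff₀ h2pos hsp]
        calc c0 * Real.sqrt t = c0 * Real.sqrt (tn:ℝ) := by rw [hsqtn]
          _ ≤ 2^tn := choose_sqrt tn k
          _ = 1 * 2^tn := by ring
      rw [hdiff, abs_div, abs_neg, abs_of_nonneg (by positivity : (0:ℝ) ≤ A * c0 * y),
        abs_of_nonneg (by linarith : (0:ℝ) ≤ (t:ℝ))]
      rw [div_le_div_iff₀ (by linarith) (by positivity)]
      calc A * c0 * (y:ℝ) * ((t:ℝ) * Real.sqrt t)
          = (A * c0) * Real.sqrt t * ((y:ℝ) * t) := by ring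
        _ ≤ (1 / Real.sqrt t) * Real.sqrt t * ((y:ℝ) * t) := by
            apply mul_le_mul_of_nonneg_right _ (by positivity)
            exact mul_le_mul_of_nonneg_right hAc0 (le_of_lt hsp)
        _ = (y:ℝ) * t := by field_simp
      -- done main case
    · by_cases hyeq : y = t
      · -- y = t
        have hH1 : H (y+1) (t-1) = 0 := by
          rw [H, if_neg]; rintro ⟨_, _, h3⟩; omega
        have hH0 : H y t = (2:ℝ)^(-t) := by
          rw [H, if_pos ⟨by omega, hpar, by omega⟩]
          rw [show ((t + y) / 2).toNat = tn by omega, Nat.choose_self]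
          norm_num
        rw [hH1, hH0, zero_sub, abs_neg, abs_of_nonneg (by positivity), hA]
        have hsq2 : Real.sqrt t ≤ 2^tn := by
          have := choose_sqrt tn 0
          rw [Nat.choose_zero_right, Nat.cast_one, one_mul, hsqtn] at this
          exact this
        rw [hyeq]
        rw [inv_eq_one_div, div_le_div_iff₀ h2pos (by positivity)]
        calc 1 * ((t:ℝ) * Real.sqrt t) = Real.sqrt t * t := by ring
          _ ≤ 2^tn * t := by nlinarith
          _ = (t:ℝ) * 2^tn := by ring
      · -- y > t : both zero
        have hH1 : H (y+1) (t-1) = 0 := by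
          rw [H, if_neg]; rintro ⟨_, _, h3⟩; omega
        have hH0 : H y t = 0 := by
          rw [H, if_neg]; rintro ⟨_, _, h3⟩; omega
        simp [hH1, hH0, hRHS]
  · -- parity fails: both zero
    have hH1 : H (y+1) (t-1) = 0 := by
      rw [H, if_neg]; rintro ⟨_, h2, _⟩; omega
    have hH0 : H y t = 0 := by
      rw [H, if_neg]; rintro ⟨_, h2, _⟩; omega
    simp [hH1, hH0, hRHS]

theorem c1_converges :
    ∃ c : ℝ, HasSum (fun n : ℕ => 2 * |INF ((n : ℤ) + 1) (tmax ((n : ℤ) + 1))|) c := by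
  have key : ∀ n : ℕ, 2 * |INF ((n:ℤ)+1) (tmax ((n:ℤ)+1))| ≤ 6 * Real.sqrt 3 / ((n:ℝ)+1)^2 := by
    intro n
    set y : ℤ := (n:ℤ)+1 with hydef
    have hy : 1 ≤ y := by omega
    have htm : tmax y = (y^2-4)/3 + 2 := by
      rw [tmax, Int.fdiv_eq_ediv_of_nonneg _ (by norm_num)]
    have hsq : 1 ≤ y^2 := by nlinarith
    have ht1 : 1 ≤ tmax y := by omega
    have h3t : y^2 ≤ 3 * tmax y := by omega
    set t := tmax y with htdef
    have hb := INF_bound y t hy ht1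
    have hyR : ((y:ℤ):ℝ) = (n:ℝ)+1 := by rw [hydef]; push_cast; ring
    have hyR1 : (1:ℝ) ≤ ((y:ℤ):ℝ) := by exact_mod_cast hy
    have htR1 : (1:ℝ) ≤ ((t:ℤ):ℝ) := by exact_mod_cast ht1
    set s := Real.sqrt ((t:ℤ):ℝ) with hsdef
    have hs0 : 0 < s := Real.sqrt_pos.mpr (by linarith)
    have hs2 : s^2 = ((t:ℤ):ℝ) := Real.sq_sqrt (by linarith)
    have h3tR : ((y:ℤ):ℝ)^2 ≤ 3 * ((t:ℤ):ℝ) := by exact_mod_cast h3t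
    have h1 : ((y:ℤ):ℝ) ≤ Real.sqrt 3 * s := by
      have : ((y:ℤ):ℝ) = Real.sqrt (((y:ℤ):ℝ)^2) := (Real.sqrt_sq (by linarith)).symm
      rw [this, hsdef, ← Real.sqrt_mul (by norm_num : (0:ℝ) ≤ 3)]
      exact Real.sqrt_le_sqrt (by linarith)
    have h2 : ((y:ℤ):ℝ)^3 ≤ (Real.sqrt 3 * s)^3 :=
      pow_le_pow_left₀ (by linarith) h1 3
    have h3 : (Real.sqrt 3 * s)^3 = 3 * Real.sqrt 3 * (((t:ℤ):ℝ) * s) := by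
      have e : (Real.sqrt 3 * s)^3 = (Real.sqrt 3^2 * Real.sqrt 3) * (s^2 * s) := by ring
      rw [e, hs2, Real.sq_sqrt (by norm_num : (0:ℝ) ≤ 3)]
    have hmain : ((y:ℤ):ℝ) / (((t:ℤ):ℝ) * s) ≤ 3 * Real.sqrt 3 / ((n:ℝ)+1)^2 := by
      rw [← hyR, div_le_div_iff₀ (by positivity) (by positivity)]
      calc ((y:ℤ):ℝ) * ((y:ℤ):ℝ)^2 = ((y:ℤ):ℝ)^3 := by ring
        _ ≤ 3 * Real.sqrt 3 * (((t:ℤ):ℝ) * s) := by rw [← h3]; exact h2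
    calc 2 * |INF y t| ≤ 2 * (((y:ℤ):ℝ) / (((t:ℤ):ℝ) * s)) := by linarith
      _ ≤ 2 * (3 * Real.sqrt 3 / ((n:ℝ)+1)^2) := by linarith
      _ = 6 * Real.sqrt 3 / ((n:ℝ)+1)^2 := by ring
  have hg : Summable (fun n : ℕ => 6 * Real.sqrt 3 / ((n:ℝ)+1)^2) := by
    have h := Real.summable_one_div_nat_pow.mpr (one_lt_two : 1 < 2)
    have h2 := (summable_nat_add_iff 1).mpr h
    have h3 := h2.mul_left (6 * Real.sqrt 3)
    apply h3.congr
    intro b; push_cast; ring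
  have hsum : Summable (fun n : ℕ => 2 * |INF ((n : ℤ) + 1) (tmax ((n : ℤ) + 1))|) :=
    Summable.of_nonneg_of_le (fun n => by positivity) key hg
  exact hsum
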